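/- arXiv:2501.19027 — 3 statements merged into one kernel-verified Lean document; each statement's English description precedes it below -/
import Mathlib

section
/- Let n ∈ ℕ, let φ : ℕ → ℝ^n, R : ℕ → ℝ, γ, λ ∈ ℝ, and let θ : ℕ → ℝ^n be any weight sequence. For all natural numbers k, t with k + 1 ≤ t, the interim λ-return satisfies the recursion G_k^{λ|t+1} = G_k^{λ|t} + (λγ)^{t−k} δ'_t, where δ'_t := R_{t+1} + γ ⟨θ_t, φ_{t+1}⟩ − ⟨θ_{t−1}, φ_t⟩. -/
open Matrix

/-- The `i`-step return from time `k`: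
`G_k^{(i)} = Σ_{j=1}^{i} γ^{j−1} R_{k+j} + γ^i ⟨θ_{k+i−1}, φ_{k+i}⟩`. -/
noncomputable def iStepReturn (n : ℕ) (θ φ : ℕ → (Fin n → ℝ)) (R : ℕ → ℝ) (γ : ℝ)
    (k i : ℕ) : ℝ :=
  (∑ j ∈ Finset.Icc 1 i, γ ^ (j - 1) * R (k + j)) + γ ^ i * (θ (k + i - 1) ⬝ᵥ φ (k + i))

/-- The interim λ-return truncated at horizon `t` (for `k < t`):
`G_k^{λ|t} = (1−λ) Σ_{i=1}^{t−k−1} λ^{i−1} G_k^{(i)} + λ^{t−k−1} G_k^{(t−k)}`. -/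
noncomputable def interimLambdaReturn (n : ℕ) (θ φ : ℕ → (Fin n → ℝ)) (R : ℕ → ℝ)
    (γ lam : ℝ) (k t : ℕ) : ℝ :=
  (1 - lam) * ∑ i ∈ Finset.Icc 1 (t - k - 1), lam ^ (i - 1) * iStepReturn n θ φ R γ k i
    + lam ^ (t - k - 1) * iStepReturn n θ φ R γ k (t - k)


lemma iStepReturn_succ_sub (n : ℕ) (θ φ : ℕ → (Fin n → ℝ)) (R : ℕ → ℝ) (γ : ℝ)
    (k i : ℕ) :
    iStepReturn n θ φ R γ k (i + 1) =
      iStepReturn n θ φ R γ k i +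
        γ ^ i * (R (k + i + 1) + γ * (θ (k + i) ⬝ᵥ φ (k + i + 1))
          - (θ (k + i - 1) ⬝ᵥ φ (k + i))) := by
  unfold iStepReturn
  rw [Finset.sum_Icc_succ_top (by omega : 1 ≤ i + 1)]
  have h1 : k + (i + 1) - 1 = k + i := by omega
  have h2 : k + (i + 1) = k + i + 1 := by omega
  rw [h1, h2]
  simp only [Nat.add_sub_cancel]
  ring

/-- The interim λ-return recursion:
`G_k^{λ|t+1} = G_k^{λ|t} + (λγ)^{t−k} δ'_t`, where
`δ'_t = R_{t+1} + γ ⟨θ_t, φ_{t+1}⟩ − ⟨θ_{t−1}, φ_t⟩`. -/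
theorem interimLambdaReturn_rec (n : ℕ) (φ : ℕ → (Fin n → ℝ)) (R : ℕ → ℝ)
    (γ lam : ℝ) (θ : ℕ → (Fin n → ℝ)) :
    ∀ k t : ℕ, k + 1 ≤ t →
      interimLambdaReturn n θ φ R γ lam k (t + 1) =
        interimLambdaReturn n θ φ R γ lam k t +
          (lam * γ) ^ (t - k) *
            (R (t + 1) + γ * (θ t ⬝ᵥ φ (t + 1)) - (θ (t - 1) ⬝ᵥ φ t)) := by
  intro k t h
  obtain ⟨m, rfl⟩ : ∃ m, t = k + (m + 1) := ⟨t - k - 1, by omega⟩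
  unfold interimLambdaReturn
  have e1 : k + (m + 1) + 1 - k - 1 = m + 1 := by omega
  have e2 : k + (m + 1) + 1 - k = m + 2 := by omega
  have e3 : k + (m + 1) - k - 1 = m := by omega
  have e4 : k + (m + 1) - k = m + 1 := by omega
  rw [e1, e2, e3, e4, Finset.sum_Icc_succ_top (by omega : 1 ≤ m + 1)]
  have key := iStepReturn_succ_sub n θ φ R γ k (m + 1)
  have h1 : k + (m + 1) + 1 = k + (m + 1) + 1 := rfl
  have h2 : k + (m + 1) - 1 = k + (m + 1) - 1 := rfl
  rw [key]
  simp only [Nat.add_sub_cancel]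
  have : k + (m + 1) - 1 = k + m := by omega
  rw [this]
  ring
end

section
/- (Theorem 1, equivalence of forward and incremental true online TD(λ)-Replan.) Let n ∈ ℕ, φ : ℕ → ℝ^n, α : ℕ → ℝ, R : ℕ → ℝ, γ, λ ∈ ℝ, and let θ : ℕ → ℝ^n satisfy the forward-view replay closed form: for every t ∈ ℕ, θ_{t+1} = (A_t A_{t−1} ⋯ A_0) θ_t + Σ_{k=0}^{t} (A_t ⋯ A_{k+1}) (α_k φ_k G_k^{λ|t+1}), where A_i := I − α_i φ_i φ_iᵀ and G_k^{λ|t+1} is the interim λ-return determined by θ, φ, R, γ, λ. Define sequences incrementally by e_{−1} := 0 ∈ ℝ^n, ē_{−1} := 0 ∈ ℝ^n, Ā_{−1} := I, and for t ≥ 0: e_t := γλ A_t e_{t−1} + α_t φ_t; ē_t := A_t ē_{t−1} + (δ_t + ⟨θ_t, φ_t⟩ − ⟨θ_{t−1}, φ_t⟩) e_t + α_t ⟨θ_{t−1}, φ_t⟩ φ_t with δ_t := R_{t+1} + γ ⟨θ_t, φ_{t+1}⟩ − ⟨θ_t, φ_t⟩ (and θ_{−1} := θ_0); Ā_t := A_t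 Ā_{t−1}. Then for every t ∈ ℕ, θ_{t+1} = Ā_t θ_t + ē_t. -/
open Matrix

/-- `prodDesc n A t j = A t * A (t-1) * ⋯ * A j`, the product in decreasing index order;
it equals the identity when `j = t + 1` (empty product). -/
noncomputable def prodDesc (n : ℕ) (A : ℕ → Matrix (Fin n) (Fin n) ℝ) (t j : ℕ) :
    Matrix (Fin n) (Fin n) ℝ :=
  ((List.range (t + 1 - j)).map (fun i => A (t - i))).prod

lemma prodDesc_empty (n : ℕ) (A : ℕ → Matrix (Fin n) (Fin n) ℝ) (t : ℕ) :
    prodDesc n A t (t + 1) = 1 := by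
  simp [prodDesc]

lemma prodDesc_succ (n : ℕ) (A : ℕ → Matrix (Fin n) (Fin n) ℝ) (t j : ℕ) (h : j ≤ t + 1) :
    prodDesc n A (t + 1) j = A (t + 1) * prodDesc n A t j := by
  have h1 : t + 1 + 1 - j = (t + 1 - j) + 1 := by omega
  rw [prodDesc, h1, List.range_succ_eq_map]
  rw [List.map_cons, List.prod_cons, List.map_map]
  have : ((fun i => A (t + 1 - i)) ∘ Nat.succ) = fun i => A (t - i) := by
    funext i; simp [Nat.succ_sub_succ]
  simp [this, prodDesc]

lemma interim_last (n : ℕ) (θ φ : ℕ → (Fin n → ℝ)) (R : ℕ → ℝ) (γ lam : ℝ) (k : ℕ) :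
    interimLambdaReturn n θ φ R γ lam k (k + 1)
      = R (k + 1) + γ * (θ k ⬝ᵥ φ (k + 1)) := by
  have h1 : k + 1 - k - 1 = 0 := by omega
  have h2 : k + 1 - k = 1 := by omega
  rw [interimLambdaReturn, h1, h2]
  simp [iStepReturn]

lemma iStep_succ (n : ℕ) (θ φ : ℕ → (Fin n → ℝ)) (R : ℕ → ℝ) (γ : ℝ) (k m : ℕ) :
    iStepReturn n θ φ R γ k (m + 2)
      = iStepReturn n θ φ R γ k (m + 1)
        + γ ^ (m + 1) * (R (k + m + 2) + γ * (θ (k + m + 1) ⬝ᵥ φ (k + m + 2))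
            - (θ (k + m) ⬝ᵥ φ (k + m + 1))) := by
  rw [iStepReturn, iStepReturn]
  rw [show m + 2 = (m + 1) + 1 from rfl, Finset.sum_Icc_succ_top (by omega : 1 ≤ m + 1 + 1)]
  have e1 : k + (m + 1 + 1) - 1 = k + m + 1 := by omega
  have e2 : k + (m + 1) - 1 = k + m := by omega
  have e3 : k + (m + 1 + 1) = k + m + 2 := by omega
  have e4 : k + (m + 1) = k + m + 1 := by omega
  rw [e1, e2, e3, e4, show m + 1 + 1 - 1 = m + 1 from by omega]
  ring

lemma interim_step (n : ℕ) (θ φ : ℕ → (Fin n → ℝ)) (R : ℕ → ℝ) (γ lam : ℝ) (k t : ℕ)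
    (hk : k ≤ t) :
    interimLambdaReturn n θ φ R γ lam k (t + 2)
      = interimLambdaReturn n θ φ R γ lam k (t + 1)
        + (γ * lam) ^ (t + 1 - k)
          * (R (t + 2) + γ * (θ (t + 1) ⬝ᵥ φ (t + 2)) - (θ t ⬝ᵥ φ (t + 1))) := by
  obtain ⟨m, rfl⟩ := Nat.exists_eq_add_of_le hk
  have h1 : k + m + 2 - k - 1 = m + 1 := by omega
  have h2 : k + m + 2 - k = m + 2 := by omega
  have h3 : k + m + 1 - k - 1 = m := by omega
  have h4 : k + m + 1 - k = m + 1 := by omega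
  rw [interimLambdaReturn, interimLambdaReturn, h1, h2, h3, h4]
  rw [Finset.sum_Icc_succ_top (by omega : 1 ≤ m + 1)]
  have h6 : m + 1 - 1 = m := by omega
  rw [h6, iStep_succ]
  rw [mul_pow]
  ring

lemma mulVec_sumF {n : ℕ} (M : Matrix (Fin n) (Fin n) ℝ) (s : Finset ℕ)
    (f : ℕ → Fin n → ℝ) : M *ᵥ (∑ i ∈ s, f i) = ∑ i ∈ s, M *ᵥ f i := by
  simp only [← Matrix.mulVecLin_apply, map_sum]

lemma e_closed (n : ℕ) (φ : ℕ → (Fin n → ℝ)) (α : ℕ → ℝ) (γ lam : ℝ)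
    (A : ℕ → Matrix (Fin n) (Fin n) ℝ) (e : ℕ → (Fin n → ℝ))
    (he0 : e 0 = 0)
    (he : ∀ t, e (t + 1) = (γ * lam) • ((A t) *ᵥ e t) + α t • φ t) :
    ∀ t, e (t + 1) = ∑ k ∈ Finset.range (t + 1),
      ((γ * lam) ^ (t - k) * α k) • (prodDesc n A t (k + 1) *ᵥ φ k) := by
  intro t
  induction t with
  | zero =>
      rw [he 0, he0]
      simp [prodDesc_empty n A 0]
  | succ t ih =>
      rw [he (t + 1), ih]
      conv_rhs => rw [Finset.sum_range_succ, prodDesc_empty n A (t + 1), one_mulVec,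
        Nat.sub_self, pow_zero, one_mul]
      congr 1
      rw [mulVec_sumF, Finset.smul_sum]
      refine Finset.sum_congr rfl fun k hk => ?_
      have hkt : k ≤ t := by
        have := Finset.mem_range.mp hk; omega
      rw [Matrix.mulVec_smul, prodDesc_succ n A t (k + 1) (by omega),
        ← Matrix.mulVec_mulVec, smul_smul, show t + 1 - k = (t - k) + 1 from by omega,
        pow_succ]
      ring_nf

lemma ebar_closed (n : ℕ) (φ : ℕ → (Fin n → ℝ)) (α : ℕ → ℝ)
    (R : ℕ → ℝ) (γ lam : ℝ) (θ : ℕ → (Fin n → ℝ))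
    (A : ℕ → Matrix (Fin n) (Fin n) ℝ)
    (e ebar : ℕ → (Fin n → ℝ))
    (he0 : e 0 = 0) (hebar0 : ebar 0 = 0)
    (he : ∀ t, e (t + 1) = (γ * lam) • ((A t) *ᵥ e t) + α t • φ t)
    (hebar : ∀ t, ebar (t + 1) =
      (A t) *ᵥ ebar t
        + (((R (t + 1) + γ * (θ t ⬝ᵥ φ (t + 1)) - (θ t ⬝ᵥ φ t)))
            + (θ t ⬝ᵥ φ t) - (θ (t - 1) ⬝ᵥ φ t)) • e (t + 1)
        + (α t * (θ (t - 1) ⬝ᵥ φ t)) • φ t) :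
    ∀ t, ebar (t + 1) = ∑ k ∈ Finset.range (t + 1),
      (α k * interimLambdaReturn n θ φ R γ lam k (t + 1))
        • (prodDesc n A t (k + 1) *ᵥ φ k) := by
  intro t
  induction t with
  | zero =>
      rw [hebar 0, hebar0, he 0, he0]
      rw [Finset.sum_range_one, prodDesc_empty n A 0, interim_last]
      simp only [Matrix.mulVec_zero, smul_zero, zero_add, one_mulVec, smul_smul]
      rw [← add_smul]
      congr 1
      ring
  | succ t ih =>
      set d : ℝ := R (t + 2) + γ * (θ (t + 1) ⬝ᵥ φ (t + 2)) - (θ t ⬝ᵥ φ (t + 1)) with hd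
      have hbar := hebar (t + 1)
      rw [show t + 1 - 1 = t from rfl] at hbar
      have hsimp : (R (t + 1 + 1) + γ * (θ (t + 1) ⬝ᵥ φ (t + 1 + 1))
            - (θ (t + 1) ⬝ᵥ φ (t + 1)))
          + (θ (t + 1) ⬝ᵥ φ (t + 1)) - (θ t ⬝ᵥ φ (t + 1)) = d := by
        rw [hd]; ring
      rw [hsimp] at hbar
      have hE : e (t + 1 + 1) = (∑ k ∈ Finset.range (t + 1),
            ((γ * lam) ^ (t + 1 - k) * α k) • (prodDesc n A (t + 1) (k + 1) *ᵥ φ k))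
          + α (t + 1) • φ (t + 1) := by
        rw [e_closed n φ α γ lam A e he0 he (t + 1), Finset.sum_range_succ,
          prodDesc_empty n A (t + 1), one_mulVec, Nat.sub_self, pow_zero, one_mul]
      have hY1 : ∑ k ∈ Finset.range (t + 1),
            (α k * interimLambdaReturn n θ φ R γ lam k (t + 1 + 1))
              • (prodDesc n A (t + 1) (k + 1) *ᵥ φ k)
          = (∑ k ∈ Finset.range (t + 1),
              A (t + 1) *ᵥ ((α k * interimLambdaReturn n θ φ R γ lam k (t + 1))
                • (prodDesc n A t (k + 1) *ᵥ φ k)))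
            + ∑ k ∈ Finset.range (t + 1),
              d • (((γ * lam) ^ (t + 1 - k) * α k)
                • (prodDesc n A (t + 1) (k + 1) *ᵥ φ k)) := by
        rw [← Finset.sum_add_distrib]
        refine Finset.sum_congr rfl fun k hk => ?_
        have hkt : k ≤ t := by have := Finset.mem_range.mp hk; omega
        rw [interim_step n θ φ R γ lam k t hkt, ← hd,
          prodDesc_succ n A t (k + 1) (by omega),
          Matrix.mulVec_smul, ← Matrix.mulVec_mulVec,
          smul_smul, ← add_smul]
        congr 1
        ring
      have hlast : R (t + 2) + γ * (θ (t + 1) ⬝ᵥ φ (t + 2))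
          = d + (θ t ⬝ᵥ φ (t + 1)) := by rw [hd]; ring
      have hy2 : (α (t + 1) * (d + (θ t ⬝ᵥ φ (t + 1)))) • φ (t + 1)
          = d • (α (t + 1) • φ (t + 1))
            + (α (t + 1) * (θ t ⬝ᵥ φ (t + 1))) • φ (t + 1) := by
        rw [smul_smul, ← add_smul]; congr 1; ring
      rw [hbar, ih, hE]
      conv_rhs => rw [Finset.sum_range_succ, prodDesc_empty n A (t + 1), one_mulVec,
        interim_last n θ φ R γ lam (t + 1), hlast, hY1, hy2]
      rw [mulVec_sumF, smul_add, Finset.smul_sum]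
      abel

/-- **Theorem 1** (equivalence of the forward and incremental true online TD(λ)-Replan).
If `θ` satisfies the forward-view replay closed form
`θ_{t+1} = (A_t ⋯ A_0) θ_t + Σ_{k=0}^{t} (A_t ⋯ A_{k+1}) (α_k φ_k G_k^{λ|t+1})`
with `A_i = I − α_i φ_i φ_iᵀ`, and the sequences `e, ē, Ā` are defined incrementally by
`e_{−1} = 0`, `ē_{−1} = 0`, `Ā_{−1} = I` and, for `t ≥ 0`,
`e_t = γλ A_t e_{t−1} + α_t φ_t`,
`ē_t = A_t ē_{t−1} + (δ_t + ⟨θ_t,φ_t⟩ − ⟨θ_{t−1},φ_t⟩) e_t + α_t ⟨θ_{t−1},φ_t⟩ φ_t`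
(with `δ_t = R_{t+1} + γ⟨θ_t,φ_{t+1}⟩ − ⟨θ_t,φ_t⟩` and `θ_{−1} = θ_0`), and
`Ā_t = A_t Ā_{t−1}`, then `θ_{t+1} = Ā_t θ_t + ē_t` for every `t`.
Here index `u + 1` of `e`, `ebar`, `Abar` corresponds to subscript `u` (so index `0`
corresponds to subscript `−1`), and natural subtraction makes `θ (0 - 1) = θ 0 = θ_{−1}`. -/
theorem trueOnlineTDReplan_incremental (n : ℕ) (φ : ℕ → (Fin n → ℝ)) (α : ℕ → ℝ)
    (R : ℕ → ℝ) (γ lam : ℝ) (θ : ℕ → (Fin n → ℝ))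
    (A : ℕ → Matrix (Fin n) (Fin n) ℝ)
    (hA : ∀ i, A i = 1 - α i • vecMulVec (φ i) (φ i))
    (hforward : ∀ t, θ (t + 1) =
      (prodDesc n A t 0) *ᵥ θ t +
        ∑ k ∈ Finset.range (t + 1),
          (prodDesc n A t (k + 1)) *ᵥ
            ((α k * interimLambdaReturn n θ φ R γ lam k (t + 1)) • φ k))
    (e ebar : ℕ → (Fin n → ℝ)) (Abar : ℕ → Matrix (Fin n) (Fin n) ℝ)
    (he0 : e 0 = 0) (hebar0 : ebar 0 = 0) (hAbar0 : Abar 0 = 1)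
    (he : ∀ t, e (t + 1) = (γ * lam) • ((A t) *ᵥ e t) + α t • φ t)
    (hebar : ∀ t, ebar (t + 1) =
      (A t) *ᵥ ebar t
        + (((R (t + 1) + γ * (θ t ⬝ᵥ φ (t + 1)) - (θ t ⬝ᵥ φ t)))
            + (θ t ⬝ᵥ φ t) - (θ (t - 1) ⬝ᵥ φ t)) • e (t + 1)
        + (α t * (θ (t - 1) ⬝ᵥ φ t)) • φ t)
    (hAbar : ∀ t, Abar (t + 1) = A t * Abar t) :
    ∀ t, θ (t + 1) = (Abar (t + 1)) *ᵥ θ t + ebar (t + 1) := by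
  have hAbar_eq : ∀ t, Abar (t + 1) = prodDesc n A t 0 := by
    intro t
    induction t with
    | zero => rw [hAbar 0, hAbar0]; simp [prodDesc]
    | succ t ih => rw [hAbar (t + 1), ih, prodDesc_succ n A t 0 (by omega)]
  intro t
  rw [hforward t, hAbar_eq t,
    ebar_closed n φ α R γ lam θ A e ebar he0 hebar0 he hebar t]
  congr 1
  refine Finset.sum_congr rfl fun k hk => ?_
  rw [Matrix.mulVec_smul]
end

section
/- (Theorem 2, true online TD(λ) as a special case of true online TD(λ)-Replan.) Let n ∈ ℕ, φ : ℕ → ℝ^n, α : ℕ → ℝ, R : ℕ → ℝ, γ, λ ∈ ℝ, θ_0 ∈ ℝ^n, and set A_t := I − α_t φ_t φ_tᵀ. Define e_{−1} := 0, ē_{−1} := 0, ā_{−1} := θ_0, θ_{−1} := θ_0, and for t ≥ 0 define θ_t := ā_{t−1} + ē_{t−1}, e_t := γλ A_t e_{t−1} + α_t φ_t, ā_t := ā_{t−1} − α_t ⟨ā_{t−1}, φ_t⟩ φ_t, and ē_t := A_t ē_{t−1} + (δ_t + ⟨θ_t, φ_t⟩ − ⟨θ_{t−1}, φ_t⟩)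 e_t + α_t ⟨θ_{t−1}, φ_t⟩ φ_t, where δ_t := R_{t+1} + γ ⟨θ_t, φ_{t+1}⟩ − ⟨θ_t, φ_t⟩. Then for every t ≥ 0, the sequence θ satisfies the true online TD(λ) update: θ_{t+1} = θ_t + (δ_t + ⟨θ_t, φ_t⟩ − ⟨θ_{t−1}, φ_t⟩) e_t − α_t (⟨θ_t, φ_t⟩ − ⟨θ_{t−1}, φ_t⟩) φ_t. -/
open Matrix

lemma vecMulVec_mulVec' {n : ℕ} (a b x : Fin n → ℝ) :
    vecMulVec a b *ᵥ x = (b ⬝ᵥ x) • a := by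
  funext i
  simp [Matrix.mulVec, vecMulVec_apply, dotProduct, Finset.mul_sum, mul_comm,
    mul_left_comm]

/-- **Theorem 2** (true online TD(λ) as a special case of true online TD(λ)-Replan).
With `A_t = I − α_t φ_t φ_tᵀ`, initial conditions `e_{−1} = 0`, `ē_{−1} = 0`,
`ā_{−1} = θ_0`, `θ_{−1} = θ_0`, and, for `t ≥ 0`,
`θ_t = ā_{t−1} + ē_{t−1}`,
`e_t = γλ A_t e_{t−1} + α_t φ_t`,
`ā_t = ā_{t−1} − α_t ⟨ā_{t−1}, φ_t⟩ φ_t`,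
`ē_t = A_t ē_{t−1} + (δ_t + ⟨θ_t,φ_t⟩ − ⟨θ_{t−1},φ_t⟩) e_t + α_t ⟨θ_{t−1},φ_t⟩ φ_t`
where `δ_t = R_{t+1} + γ⟨θ_t,φ_{t+1}⟩ − ⟨θ_t,φ_t⟩`, the sequence `θ` satisfies the
true online TD(λ) update
`θ_{t+1} = θ_t + (δ_t + ⟨θ_t,φ_t⟩ − ⟨θ_{t−1},φ_t⟩) e_t − α_t (⟨θ_t,φ_t⟩ − ⟨θ_{t−1},φ_t⟩) φ_t`
for every `t ≥ 0`. Here index `u + 1` of each sequence corresponds to subscript `u`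
(so index `0` corresponds to subscript `−1`). -/
theorem trueOnlineTD_special_case (n : ℕ) (φ : ℕ → (Fin n → ℝ)) (α : ℕ → ℝ)
    (R : ℕ → ℝ) (γ lam : ℝ) (θ0 : Fin n → ℝ)
    (A : ℕ → Matrix (Fin n) (Fin n) ℝ)
    (hA : ∀ i, A i = 1 - α i • vecMulVec (φ i) (φ i))
    (e ebar abar θ : ℕ → (Fin n → ℝ))
    (he0 : e 0 = 0) (hebar0 : ebar 0 = 0) (habar0 : abar 0 = θ0) (hθ0 : θ 0 = θ0)
    (hθ : ∀ t, θ (t + 1) = abar t + ebar t)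
    (he : ∀ t, e (t + 1) = (γ * lam) • ((A t) *ᵥ e t) + α t • φ t)
    (habar : ∀ t, abar (t + 1) = abar t - (α t * (abar t ⬝ᵥ φ t)) • φ t)
    (hebar : ∀ t, ebar (t + 1) =
      (A t) *ᵥ ebar t
        + ((R (t + 1) + γ * (θ (t + 1) ⬝ᵥ φ (t + 1)) - (θ (t + 1) ⬝ᵥ φ t))
            + (θ (t + 1) ⬝ᵥ φ t) - (θ t ⬝ᵥ φ t)) • e (t + 1)
        + (α t * (θ t ⬝ᵥ φ t)) • φ t) :
    ∀ t, θ (t + 2) = θ (t + 1)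
        + ((R (t + 1) + γ * (θ (t + 1) ⬝ᵥ φ (t + 1)) - (θ (t + 1) ⬝ᵥ φ t))
            + (θ (t + 1) ⬝ᵥ φ t) - (θ t ⬝ᵥ φ t)) • e (t + 1)
        - (α t * ((θ (t + 1) ⬝ᵥ φ t) - (θ t ⬝ᵥ φ t))) • φ t := by
  intro t
  have h1 := hθ (t + 1)
  have h2 := hθ t
  rw [show t + 1 + 1 = t + 2 from rfl] at h1
  rw [h1, habar t, hebar t, hA t, Matrix.sub_mulVec, Matrix.one_mulVec,
    Matrix.smul_mulVec, vecMulVec_mulVec', h2]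
  have hd : (abar t + ebar t) ⬝ᵥ φ t = abar t ⬝ᵥ φ t + φ t ⬝ᵥ ebar t := by
    rw [add_dotProduct, dotProduct_comm (φ t) (ebar t)]
  rw [hd]
  module
end
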